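/- For every integer i ≥ 1 there exists a map ρ : Ξ_i → ℝ such that for every i-times continuously differentiable strictly positive function t : ℝ → ℝ and every x ∈ ℝ: (ln t)^{(i)}(x) = t(x)^{−2^{i−1}} Σ_{(η_0,…,η_i) ∈ Ξ_i} ρ(η_0,…,η_i) Π_{j=0}^i (t^{(j)}(x))^{η_j}. -/

import Mathlib

open Finset

namespace Stmt19Aux

/-- `Ξ_i` as a concrete finset. -/
def XiSet (i : ℕ) : Finset (Fin (i + 1) → ℕ) :=
  (Finset.Nat.antidiagonalTuple (i + 1) (2 ^ (i - 1))).filter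
    (fun η => ∑ j : Fin (i + 1), (j : ℕ) * η j = i)

lemma mem_XiSet {i : ℕ} {η : Fin (i + 1) → ℕ} :
    η ∈ XiSet i ↔ (∑ j, η j) = 2 ^ (i - 1) ∧ (∑ j : Fin (i + 1), (j : ℕ) * η j) = i := by
  simp [XiSet, Finset.Nat.mem_antidiagonalTuple]

/-- Any finite linear combination of monomials with exponents in `Ξ_i` can be
rewritten as a sum over `Ξ_i`. -/
lemma good_of {α : Type} {i : ℕ} (A : Finset α) (c : α → ℝ) (e : α → (Fin (i + 1) → ℕ))
    (he : ∀ a ∈ A, e a ∈ XiSet i) :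
    ∃ ρ : (Fin (i + 1) → ℕ) → ℝ, ∀ v : Fin (i + 1) → ℝ,
      ∑ η ∈ XiSet i, ρ η * ∏ j, v j ^ η j = ∑ a ∈ A, c a * ∏ j, v j ^ e a j := by
  classical
  refine ⟨fun η => ∑ a ∈ A.filter (fun a => e a = η), c a, fun v => ?_⟩
  rw [← Finset.sum_fiberwise_of_maps_to he (fun a => c a * ∏ j, v j ^ e a j)]
  refine Finset.sum_congr rfl fun η _ => ?_
  rw [Finset.sum_mul]
  refine Finset.sum_congr rfl fun a ha => ?_
  rw [(Finset.mem_filter.1 ha).2]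

lemma prod_pow_add {n : ℕ} (v : Fin n → ℝ) (a b : Fin n → ℕ) :
    ∏ k, v k ^ (a k + b k) = (∏ k, v k ^ a k) * ∏ k, v k ^ b k := by
  simp [pow_add, Finset.prod_mul_distrib]

lemma prod_pow_single {n : ℕ} (v : Fin n → ℝ) (a : Fin n) (m : ℕ) :
    (∏ k, v k ^ (if k = a then m else 0)) = v a ^ m := by
  have h : ∀ k, v k ^ (if k = a then m else 0) = (if k = a then v k ^ m else 1) := by
    intro k; split <;> simp
  simp_rw [h]
  simp [Finset.prod_ite_eq' univ a (fun k => v k ^ m)]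

lemma prod_pow_snoc {n : ℕ} (v : Fin (n + 1) → ℝ) (μ : Fin n → ℕ) :
    (∏ k, v k ^ (Fin.snoc μ 0 : Fin (n + 1) → ℕ) k) = ∏ j, v (Fin.castSucc j) ^ μ j := by
  rw [Fin.prod_univ_castSucc]
  simp

lemma prod_pow_update {n : ℕ} (w : Fin n → ℝ) (η : Fin n → ℕ) (j₀ : Fin n) (m : ℕ) :
    ∏ j, w j ^ (Function.update η j₀ m) j
      = w j₀ ^ m * ∏ k ∈ univ.erase j₀, w k ^ η k := by
  rw [← Finset.mul_prod_erase univ _ (Finset.mem_univ j₀)]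
  congr 1
  · simp
  · refine Finset.prod_congr rfl fun k hk => ?_
    rw [Function.update_of_ne (Finset.mem_erase.1 hk).1]

lemma sum_snoc {n : ℕ} (μ : Fin n → ℕ) :
    (∑ k, (Fin.snoc μ 0 : Fin (n + 1) → ℕ) k) = ∑ j, μ j := by
  rw [Fin.sum_univ_castSucc]; simp

lemma wsum_snoc {n : ℕ} (μ : Fin n → ℕ) :
    (∑ k : Fin (n + 1), (k : ℕ) * (Fin.snoc μ 0 : Fin (n + 1) → ℕ) k)
      = ∑ j : Fin n, (j : ℕ) * μ j := by
  rw [Fin.sum_univ_castSucc]; simp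

lemma sum_single {n : ℕ} (a : Fin n) (m : ℕ) :
    (∑ k : Fin n, (if k = a then m else 0)) = m := by simp

lemma wsum_single {n : ℕ} (a : Fin n) (m : ℕ) :
    (∑ k : Fin n, (k : ℕ) * (if k = a then m else 0)) = (a : ℕ) * m := by
  simp [mul_ite]

/-- Main induction. -/
lemma key (i : ℕ) (hi : 1 ≤ i) :
    ∃ ρ : (Fin (i + 1) → ℕ) → ℝ, ∀ t : ℝ → ℝ, ContDiff ℝ (i : ℕ∞) t → (∀ x, 0 < t x) →
      ∀ x : ℝ,
      iteratedDeriv i (fun y => Real.log (t y)) x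
        = (∑ η ∈ XiSet i, ρ η * ∏ j : Fin (i + 1), iteratedDeriv (j : ℕ) t x ^ η j)
            / t x ^ 2 ^ (i - 1) := by
  classical
  induction i, hi using Nat.le_induction with
  | base =>
    refine ⟨fun _ => 1, fun t ht hpos x => ?_⟩
    have hXi : XiSet 1 = {![0, 1]} := by
      ext η
      rw [mem_XiSet, Finset.mem_singleton]
      constructor
      · rintro ⟨h1, h2⟩
        rw [Fin.sum_univ_two] at h1 h2
        simp at h2
        funext j
        fin_cases j <;> simp <;> omega
      · rintro rfl
        constructor <;> simp [Fin.sum_univ_two]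
    have h1 : HasDerivAt t (deriv t x) x :=
      ((ht.differentiable (by norm_num)) x).hasDerivAt
    have h2 : HasDerivAt (fun y => Real.log (t y)) ((t x)⁻¹ * deriv t x) x :=
      (Real.hasDerivAt_log (ne_of_gt (hpos x))).comp x h1
    rw [iteratedDeriv_one, h2.deriv, hXi]
    simp [Fin.prod_univ_two, iteratedDeriv_one, iteratedDeriv_zero]
    rw [div_eq_inv_mul]
  | succ i hi IH =>
    obtain ⟨ρ, hρ⟩ := IH
    set N := 2 ^ (i - 1) with hN
    have hN1 : 1 ≤ N := Nat.one_le_two_pow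
    have h2N : 2 ^ ((i + 1) - 1) = N + N := by
      have : i - 1 + 1 = i := by omega
      rw [Nat.add_sub_cancel, ← this, pow_succ, hN]
      omega
    -- exponent data for the first family
    set e₁ : ((Fin (i + 1) → ℕ) × Fin (i + 1)) → (Fin (i + 2) → ℕ) :=
      fun p k => (Fin.snoc (Function.update p.1 p.2 (p.1 p.2 - 1)) 0 : Fin (i + 2) → ℕ) k
        + ((if k = Fin.succ p.2 then 1 else 0) + (if k = 0 then N else 0)) with he₁
    set c₁ : ((Fin (i + 1) → ℕ) × Fin (i + 1)) → ℝ := fun p => ρ p.1 * p.1 p.2 with hc₁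
    set A₁ : Finset ((Fin (i + 1) → ℕ) × Fin (i + 1)) :=
      (XiSet i ×ˢ univ).filter (fun p => 1 ≤ p.1 p.2) with hA₁
    -- exponent data for the second family
    set e₂ : (Fin (i + 1) → ℕ) → (Fin (i + 2) → ℕ) :=
      fun η k => (Fin.snoc η 0 : Fin (i + 2) → ℕ) k
        + ((if k = 0 then N - 1 else 0) + (if k = 1 then 1 else 0)) with he₂
    set c₂ : (Fin (i + 1) → ℕ) → ℝ := fun η => -(N : ℝ) * ρ η with hc₂
    have hmem₁ : ∀ p ∈ A₁, e₁ p ∈ XiSet (i + 1) := by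
      rintro ⟨η, j⟩ hp
      rw [hA₁, Finset.mem_filter, Finset.mem_product] at hp
      obtain ⟨⟨hη, -⟩, hj⟩ := hp
      rw [mem_XiSet] at hη
      obtain ⟨hs, hw⟩ := hη
      simp only at hj
      have hsplit : ∀ g : Fin (i + 1) → ℕ, Finset.sum univ g = g j + Finset.sum (univ.erase j) g :=
        fun g => (Finset.add_sum_erase univ g (Finset.mem_univ j)).symm
      have hupd : ∀ l ∈ univ.erase j, Function.update η j (η j - 1) l = η l := by
        intro l hl
        rw [Function.update_of_ne (Finset.mem_erase.1 hl).1]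
      rw [mem_XiSet]
      constructor
      · simp only [he₁]
        rw [Finset.sum_add_distrib, Finset.sum_add_distrib, sum_snoc, sum_single, sum_single]
        have herase : Finset.sum (univ.erase j) (Function.update η j (η j - 1))
            = Finset.sum (univ.erase j) η := Finset.sum_congr rfl hupd
        rw [show (∑ l, Function.update η j (η j - 1) l)
            = Finset.sum univ (Function.update η j (η j - 1)) from rfl,
          hsplit (Function.update η j (η j - 1)), Function.update_self, herase]
        rw [hsplit η] at hs
        omega
      · simp only [he₁]
        simp only [mul_add]
        rw [Finset.sum_add_distrib, Finset.sum_add_distrib, wsum_snoc, wsum_single, wsum_single]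
        have h1 : (∑ l : Fin (i + 1), (l : ℕ) * Function.update η j (η j - 1) l)
            = (j : ℕ) * (η j - 1) + Finset.sum (univ.erase j) (fun l : Fin (i + 1) => (l : ℕ) * η l) := by
          rw [show (∑ l : Fin (i + 1), (l : ℕ) * Function.update η j (η j - 1) l)
              = Finset.sum univ (fun l : Fin (i + 1) => (l : ℕ) * Function.update η j (η j - 1) l) from rfl,
            hsplit (fun l : Fin (i + 1) => (l : ℕ) * Function.update η j (η j - 1) l), Function.update_self]
          congr 1
          refine Finset.sum_congr rfl fun l hl => ?_
          rw [hupd l hl]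
        rw [h1]
        rw [show (∑ j_1 : Fin (i + 1), (j_1 : ℕ) * η j_1)
            = Finset.sum univ (fun l : Fin (i + 1) => (l : ℕ) * η l) from rfl,
          hsplit (fun l : Fin (i + 1) => (l : ℕ) * η l)] at hw
        simp only [Fin.val_succ, Fin.val_zero, Fin.coe_castSucc]
        obtain ⟨m, hm⟩ : ∃ m, η j = m + 1 := ⟨η j - 1, by omega⟩
        rw [hm] at hw ⊢
        have hmm : (j : ℕ) * (m + 1) = (j : ℕ) * m + (j : ℕ) := by ring
        rw [hmm] at hw
        simp only [Nat.add_sub_cancel]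
        omega
    have hmem₂ : ∀ η ∈ XiSet i, e₂ η ∈ XiSet (i + 1) := by
      intro η hη
      rw [mem_XiSet] at hη ⊢
      obtain ⟨hs, hw⟩ := hη
      constructor
      · simp only [he₂]
        rw [Finset.sum_add_distrib, Finset.sum_add_distrib, sum_snoc, sum_single, sum_single,
          hs]
        omega
      · simp only [he₂, mul_add]
        rw [Finset.sum_add_distrib, Finset.sum_add_distrib, wsum_snoc, wsum_single, wsum_single,
          hw]
        simp [Fin.val_zero, Fin.val_one]
    obtain ⟨ρ₁, hρ₁⟩ := good_of A₁ c₁ e₁ hmem₁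
    obtain ⟨ρ₂, hρ₂⟩ := good_of (XiSet i) c₂ e₂ hmem₂
    refine ⟨ρ₁ + ρ₂, fun t ht hpos x => ?_⟩
    have htI : ContDiff ℝ (i : ℕ∞) t := ht.of_le (by exact_mod_cast Nat.le_succ i)
    have hEq : iteratedDeriv i (fun y => Real.log (t y))
        = fun y => (∑ η ∈ XiSet i, ρ η * ∏ j : Fin (i + 1), iteratedDeriv (j : ℕ) t y ^ η j)
            / t y ^ N := funext fun y => hρ t htI hpos y
    -- derivatives of iterated derivatives
    have hd : ∀ j : Fin (i + 1),
        HasDerivAt (iteratedDeriv (j : ℕ) t) (iteratedDeriv ((j : ℕ) + 1) t x) x := by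
      intro j
      have hdiff : Differentiable ℝ (iteratedDeriv (j : ℕ) t) :=
        ht.differentiable_iteratedDeriv _ (by exact_mod_cast j.isLt)
      have h := (hdiff x).hasDerivAt
      rwa [iteratedDeriv_succ]
    set S : ℝ → ℝ :=
      fun y => ∑ η ∈ XiSet i, ρ η * ∏ j : Fin (i + 1), iteratedDeriv (j : ℕ) t y ^ η j with hSdef
    set S' : ℝ :=
      ∑ η ∈ XiSet i, ρ η * ∑ j : Fin (i + 1),
        (∏ k ∈ univ.erase j, iteratedDeriv (k : ℕ) t x ^ η k) •
          ((η j : ℝ) * iteratedDeriv (j : ℕ) t x ^ (η j - 1) * iteratedDeriv ((j : ℕ) + 1) t x)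
      with hS'def
    have hS : HasDerivAt S S' x := by
      refine HasDerivAt.fun_sum fun η _ => HasDerivAt.const_mul _ ?_
      exact HasDerivAt.fun_finsetProd fun j _ => HasDerivAt.fun_pow (hd j) _
    have ht0 : HasDerivAt t (iteratedDeriv 1 t x) x := by
      have := hd 0
      simpa [iteratedDeriv_zero] using this
    have hden : HasDerivAt (fun y => t y ^ N)
        ((N : ℝ) * t x ^ (N - 1) * iteratedDeriv 1 t x) x := HasDerivAt.fun_pow ht0 _
    have hne : t x ^ N ≠ 0 := pow_ne_zero _ (ne_of_gt (hpos x))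
    have hdiv := (hS.fun_div hden hne).deriv
    rw [iteratedDeriv_succ, hEq]
    rw [show (fun y => (∑ η ∈ XiSet i, ρ η *
        ∏ j : Fin (i + 1), iteratedDeriv (j : ℕ) t y ^ η j) / t y ^ N)
      = fun y => S y / t y ^ N from rfl]
    rw [hdiv]
    -- now pure algebra
    set v : Fin (i + 2) → ℝ := fun k => iteratedDeriv (k : ℕ) t x with hv
    have hRHS : (∑ η ∈ XiSet (i + 1), (ρ₁ + ρ₂) η *
          ∏ j : Fin (i + 2), iteratedDeriv (j : ℕ) t x ^ η j)
        = (∑ p ∈ A₁, c₁ p * ∏ k, v k ^ e₁ p k) + ∑ η ∈ XiSet i, c₂ η * ∏ k, v k ^ e₂ η k := by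
      rw [← hρ₁ v, ← hρ₂ v, ← Finset.sum_add_distrib]
      refine Finset.sum_congr rfl fun η _ => ?_
      simp [Pi.add_apply, add_mul, hv]
    have hv0 : v 0 = t x := by simp [hv, iteratedDeriv_zero]
    have hv1 : v 1 = iteratedDeriv 1 t x := by simp [hv]
    have claim₂ : (∑ η ∈ XiSet i, c₂ η * ∏ k, v k ^ e₂ η k)
        = -(S x * ((N : ℝ) * t x ^ (N - 1) * iteratedDeriv 1 t x)) := by
      rw [hSdef]
      rw [Finset.sum_mul, ← Finset.sum_neg_distrib]
      refine Finset.sum_congr rfl fun η _ => ?_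
      have hmon : (∏ k, v k ^ e₂ η k)
          = (∏ j : Fin (i + 1), iteratedDeriv (j : ℕ) t x ^ η j) * (t x ^ (N - 1)
              * iteratedDeriv 1 t x) := by
        simp only [he₂]
        rw [prod_pow_add, prod_pow_add, prod_pow_snoc, prod_pow_single, prod_pow_single,
          hv0, hv1]
        have hprodv : (∏ j : Fin (i + 1), v (Fin.castSucc j) ^ η j)
            = ∏ j : Fin (i + 1), iteratedDeriv (j : ℕ) t x ^ η j :=
          Finset.prod_congr rfl fun j _ => by simp [hv, Fin.coe_castSucc]
        rw [hprodv]
        ring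
      rw [hmon, hc₂]
      ring
    have claim₁ : (∑ p ∈ A₁, c₁ p * ∏ k, v k ^ e₁ p k) = S' * t x ^ N := by
      rw [hA₁]
      rw [Finset.sum_filter_of_ne (by
        rintro ⟨η, j⟩ - hne0
        rcases Nat.eq_zero_or_pos (η j) with h0 | h1
        · exfalso
          apply hne0
          simp [hc₁, h0]
        · exact h1)]
      rw [hS'def, Finset.sum_mul, Finset.sum_product]
      refine Finset.sum_congr rfl fun η hη => ?_
      rw [Finset.mul_sum, Finset.sum_mul]
      refine Finset.sum_congr rfl fun j _ => ?_
      by_cases hj0 : η j = 0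
      · simp [hc₁, hj0]
      · have hmon : (∏ k, v k ^ e₁ (η, j) k)
            = (iteratedDeriv (j : ℕ) t x ^ (η j - 1)
                * ∏ k ∈ univ.erase j, iteratedDeriv (k : ℕ) t x ^ η k)
              * (iteratedDeriv ((j : ℕ) + 1) t x * t x ^ N) := by
          simp only [he₁]
          rw [prod_pow_add, prod_pow_add, prod_pow_snoc, prod_pow_single, prod_pow_single,
            hv0]
          have hvs : v (Fin.succ j) = iteratedDeriv ((j : ℕ) + 1) t x := by
            simp [hv, Fin.val_succ]
          rw [hvs]
          have hupdv : (∏ j' : Fin (i + 1),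
              v (Fin.castSucc j') ^ (Function.update η j (η j - 1)) j')
              = iteratedDeriv (j : ℕ) t x ^ (η j - 1)
                * ∏ k ∈ univ.erase j, iteratedDeriv (k : ℕ) t x ^ η k := by
            rw [prod_pow_update (fun j' => v (Fin.castSucc j')) η j (η j - 1)]
            simp [hv, Fin.coe_castSucc]
          rw [hupdv]
          ring
        rw [hmon, hc₁, smul_eq_mul]
        ring
    rw [hRHS, claim₁, claim₂]
    have hpow : (t x ^ N) ^ 2 = t x ^ 2 ^ ((i + 1) - 1) := by
      rw [← pow_mul, h2N]
      congr 1
      omega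
    rw [← hpow]
    ring

end Stmt19Aux


/-- Lemma 17: for every `i ≥ 1` there is a universal family of coefficients
`ρ : Ξ_i → ℝ`, where `Ξ_i = {η ∈ ℕ^{i+1} : Σ η_j = 2^{i−1}, Σ j η_j = i}`, such that for every
`i`-times continuously differentiable strictly positive `t` and every `x`:
`(ln t)^{(i)}(x) = t(x)^{−2^{i−1}} Σ_{η ∈ Ξ_i} ρ(η) Π_{j=0}^i (t^{(j)}(x))^{η_j}`. -/
theorem stmt19 (i : ℕ) (hi : 1 ≤ i) :
    ∃ (Ξ : Finset (Fin (i + 1) → ℕ)) (ρ : (Fin (i + 1) → ℕ) → ℝ),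
      (∀ η : Fin (i + 1) → ℕ,
        η ∈ Ξ ↔ (∑ j, η j) = 2 ^ (i - 1) ∧ (∑ j : Fin (i + 1), (j : ℕ) * η j) = i) ∧
      ∀ t : ℝ → ℝ, ContDiff ℝ (i : ℕ∞) t → (∀ x, 0 < t x) → ∀ x : ℝ,
        iteratedDeriv i (fun y => Real.log (t y)) x =
          (∑ η ∈ Ξ, ρ η * ∏ j : Fin (i + 1), iteratedDeriv (j : ℕ) t x ^ η j) / t x ^ 2 ^ (i - 1) := by
  obtain ⟨ρ, hρ⟩ := Stmt19Aux.key i hi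
  exact ⟨Stmt19Aux.XiSet i, ρ, fun η => Stmt19Aux.mem_XiSet, hρ⟩
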